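/- Let A be an n×m real matrix with no zero rows and no zero columns, and let w ∈ ℝⁿ and v ∈ ℝ^m have strictly positive entries such that w_i² ∈ ℚ for every i and v_j² ∈ ℚ for every j. Then there exist multiplicities k : Fin n → ℕ₊ and l : Fin m → ℕ₊ such that the split matrix A' of A with multiplicities k and l satisfies √(n'·m')·‖A'‖ = ‖Ã‖·‖w‖·‖v‖, where n' = Σᵢ k_i, m' = Σⱼ l_j, ‖·‖ is the ℓ²→ℓ² operator norm, and Ã is the n×m matrix with entries ã_{ij} = a_{ij}/(w_i·v_j). -/

import Mathlib

open scoped BigOperators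

/-- The ℓ²→ℓ² operator norm of a real matrix. -/
noncomputable def l2OpNorm {α β : Type*} [Fintype α] [Fintype β] [DecidableEq β]
    (A : Matrix α β ℝ) : ℝ :=
  ‖LinearMap.toContinuousLinearMap (Matrix.toEuclideanLin A)‖

/-- The ∞→1 norm of a real matrix: `max_{x ∈ {-1,1}ⁿ, y ∈ {-1,1}^m} xᵀ A y`. -/
noncomputable def normInftyOne {α β : Type*} [Fintype α] [Fintype β] (A : Matrix α β ℝ) : ℝ :=
  ⨆ p : (α → Bool) × (β → Bool),
    ∑ i, ∑ j, (if p.1 i then (1:ℝ) else -1) * A i j * (if p.2 j then (1:ℝ) else -1)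

/-- The Grothendieck norm: sup over `k` and families of unit vectors of `Σ a_{ij} ⟨p_i, q_j⟩`. -/
noncomputable def grothendieckNorm {α β : Type*} [Fintype α] [Fintype β]
    (A : Matrix α β ℝ) : ℝ :=
  sSup { r : ℝ | ∃ (k : ℕ) (p : α → EuclideanSpace ℝ (Fin k)) (q : β → EuclideanSpace ℝ (Fin k)),
    (∀ i, ‖p i‖ = 1) ∧ (∀ j, ‖q j‖ = 1) ∧
    r = ∑ i, ∑ j, A i j * (inner ℝ (p i) (q j) : ℝ) }

/-- The matrix obtained from `A` by splitting row `i` into `k i` equal rows and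
column `j` into `l j` equal columns. -/
noncomputable def splitMatrix {n m : ℕ} (A : Matrix (Fin n) (Fin m) ℝ)
    (k : Fin n → ℕ+) (l : Fin m → ℕ+) :
    Matrix ((i : Fin n) × Fin (k i : ℕ)) ((j : Fin m) × Fin (l j : ℕ)) ℝ :=
  fun p q => A p.1 q.1 / (((k p.1 : ℕ) : ℝ) * ((l q.1 : ℕ) : ℝ))

lemma l2OpNorm_nonneg {α β : Type*} [Fintype α] [Fintype β] [DecidableEq β]
    (A : Matrix α β ℝ) : 0 ≤ l2OpNorm A := norm_nonneg _

lemma l2OpNorm_smul {α β : Type*} [Fintype α] [Fintype β] [DecidableEq β]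
    (c : ℝ) (A : Matrix α β ℝ) : l2OpNorm (c • A) = |c| * l2OpNorm A := by
  unfold l2OpNorm
  rw [map_smul]
  have : (LinearMap.toContinuousLinearMap (c • Matrix.toEuclideanLin A))
      = c • LinearMap.toContinuousLinearMap (Matrix.toEuclideanLin A) := by
    ext x; rfl
  rw [this]
  have := norm_smul c (LinearMap.toContinuousLinearMap (Matrix.toEuclideanLin A))
  rw [Real.norm_eq_abs] at this
  exact this

lemma l2OpNorm_split {n m : ℕ} (k : Fin n → ℕ+) (l : Fin m → ℕ+)
    (C : Matrix (Fin n) (Fin m) ℝ)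
    (B : Matrix ((i : Fin n) × Fin (k i : ℕ)) ((j : Fin m) × Fin (l j : ℕ)) ℝ)
    (hB : ∀ p q, B p q = C p.1 q.1 / (Real.sqrt ((k p.1 : ℕ) : ℝ) * Real.sqrt ((l q.1 : ℕ) : ℝ))) :
    l2OpNorm B = l2OpNorm C := by
  classical
  have hkpos : ∀ i, (0:ℝ) < ((k i : ℕ) : ℝ) := fun i => by exact_mod_cast (k i).pos
  have hlpos : ∀ j, (0:ℝ) < ((l j : ℕ) : ℝ) := fun j => by exact_mod_cast (l j).pos
  have hsk : ∀ i, (0:ℝ) < Real.sqrt ((k i : ℕ) : ℝ) := fun i => Real.sqrt_pos.mpr (hkpos i)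
  have hsl : ∀ j, (0:ℝ) < Real.sqrt ((l j : ℕ) : ℝ) := fun j => Real.sqrt_pos.mpr (hlpos j)
  set T := LinearMap.toContinuousLinearMap (Matrix.toEuclideanLin B) with hT
  set S := LinearMap.toContinuousLinearMap (Matrix.toEuclideanLin C) with hS
  let W : EuclideanSpace ℝ ((j : Fin m) × Fin (l j : ℕ)) → EuclideanSpace ℝ (Fin m) :=
    fun y => (WithLp.equiv 2 _).symm
      (fun j => (∑ t : Fin (l j : ℕ), y ⟨j, t⟩) / Real.sqrt ((l j : ℕ) : ℝ))
  let V : EuclideanSpace ℝ (Fin m) → EuclideanSpace ℝ ((j : Fin m) × Fin (l j : ℕ)) :=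
    fun x => (WithLp.equiv 2 _).symm (fun p => x p.1 / Real.sqrt ((l p.1 : ℕ) : ℝ))
  let U : EuclideanSpace ℝ (Fin n) → EuclideanSpace ℝ ((i : Fin n) × Fin (k i : ℕ)) :=
    fun z => (WithLp.equiv 2 _).symm (fun p => z p.1 / Real.sqrt ((k p.1 : ℕ) : ℝ))
  -- T y = U (S (W y))
  have hTy : ∀ y, T y = U (S (W y)) := by
    intro y
    ext p
    have h1 : T y p = ∑ q, B p q * y q := rfl
    have h2 : S (W y) p.1 = ∑ j, C p.1 j * W y j := rfl
    have h3 : U (S (W y)) p = S (W y) p.1 / Real.sqrt ((k p.1 : ℕ) : ℝ) := rfl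
    rw [h1, h3, h2]
    rw [← Finset.univ_sigma_univ, Finset.sum_sigma, Finset.sum_div]
    refine Finset.sum_congr rfl fun j _ => ?_
    simp only [hB, W]
    have hWy : ((WithLp.equiv 2 (Fin m → ℝ)).symm
        (fun j => (∑ t : Fin (l j : ℕ), y ⟨j, t⟩) / Real.sqrt ((l j : ℕ) : ℝ))) j
        = (∑ t : Fin (l j : ℕ), y ⟨j, t⟩) / Real.sqrt ((l j : ℕ) : ℝ) := rfl
    rw [hWy, ← Finset.mul_sum]
    ring
  -- U preserves norms
  have hnormU : ∀ z : EuclideanSpace ℝ (Fin n), ‖U z‖ = ‖z‖ := by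
    intro z
    simp only [U]
    rw [EuclideanSpace.norm_eq, EuclideanSpace.norm_eq]
    congr 1
    rw [← Finset.univ_sigma_univ, Finset.sum_sigma]
    refine Finset.sum_congr rfl fun i _ => ?_
    have : ∀ t : Fin (k i : ℕ),
        ‖((WithLp.equiv 2 _).symm
          (fun p : (i : Fin n) × Fin (k i : ℕ) => z p.1 / Real.sqrt ((k p.1 : ℕ) : ℝ)))
          (⟨i, t⟩ : (i : Fin n) × Fin (k i : ℕ))‖ ^ 2
        = ‖z i‖ ^ 2 / ((k i : ℕ) : ℝ) := by
      intro t
      have : ((WithLp.equiv 2 _).symm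
          (fun p : (i : Fin n) × Fin (k i : ℕ) => z p.1 / Real.sqrt ((k p.1 : ℕ) : ℝ)))
          (⟨i, t⟩ : (i : Fin n) × Fin (k i : ℕ)) = z i / Real.sqrt ((k i : ℕ) : ℝ) := rfl
      rw [this]
      simp [Real.norm_eq_abs, abs_div, abs_of_pos (hsk i), div_pow,
        Real.sq_sqrt (hkpos i).le, sq_abs]
    rw [Finset.sum_congr rfl (fun t _ => this t), Finset.sum_const, Finset.card_univ,
      Fintype.card_fin, nsmul_eq_mul]
    field_simp
  -- V preserves norms
  have hnormV : ∀ x : EuclideanSpace ℝ (Fin m), ‖V x‖ = ‖x‖ := by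
    intro x
    simp only [V]
    rw [EuclideanSpace.norm_eq, EuclideanSpace.norm_eq]
    congr 1
    rw [← Finset.univ_sigma_univ, Finset.sum_sigma]
    refine Finset.sum_congr rfl fun j _ => ?_
    have : ∀ t : Fin (l j : ℕ),
        ‖((WithLp.equiv 2 _).symm
          (fun p : (j : Fin m) × Fin (l j : ℕ) => x p.1 / Real.sqrt ((l p.1 : ℕ) : ℝ)))
          (⟨j, t⟩ : (j : Fin m) × Fin (l j : ℕ))‖ ^ 2
        = ‖x j‖ ^ 2 / ((l j : ℕ) : ℝ) := by
      intro t
      have : ((WithLp.equiv 2 _).symm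
          (fun p : (j : Fin m) × Fin (l j : ℕ) => x p.1 / Real.sqrt ((l p.1 : ℕ) : ℝ)))
          (⟨j, t⟩ : (j : Fin m) × Fin (l j : ℕ)) = x j / Real.sqrt ((l j : ℕ) : ℝ) := rfl
      rw [this]
      simp [Real.norm_eq_abs, abs_div, abs_of_pos (hsl j), div_pow,
        Real.sq_sqrt (hlpos j).le, sq_abs]
    rw [Finset.sum_congr rfl (fun t _ => this t), Finset.sum_const, Finset.card_univ,
      Fintype.card_fin, nsmul_eq_mul]
    field_simp
  -- W is a contraction
  have hnormW : ∀ y, ‖W y‖ ≤ ‖y‖ := by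
    intro y
    rw [EuclideanSpace.norm_eq, EuclideanSpace.norm_eq]
    apply Real.sqrt_le_sqrt
    rw [← Finset.univ_sigma_univ, Finset.sum_sigma]
    refine Finset.sum_le_sum fun j _ => ?_
    have hWj : W y j = (∑ t : Fin (l j : ℕ), y ⟨j, t⟩) / Real.sqrt ((l j : ℕ) : ℝ) := rfl
    rw [hWj, Real.norm_eq_abs, sq_abs, div_pow, Real.sq_sqrt (hlpos j).le]
    rw [div_le_iff₀ (hlpos j)]
    calc (∑ t : Fin (l j : ℕ), y ⟨j, t⟩) ^ 2
        ≤ (Finset.univ.card : ℝ) * ∑ t : Fin (l j : ℕ), y ⟨j, t⟩ ^ 2 := by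
          exact sq_sum_le_card_mul_sum_sq
      _ = (∑ t : Fin (l j : ℕ), ‖y ⟨j, t⟩‖ ^ 2) * ((l j : ℕ) : ℝ) := by
          rw [Finset.card_univ, Fintype.card_fin]
          simp only [Real.norm_eq_abs, sq_abs]
          ring
  -- W (V x) = x
  have hWV : ∀ x, W (V x) = x := by
    intro x
    ext j
    have : W (V x) j = (∑ _t : Fin (l j : ℕ), x j / Real.sqrt ((l j : ℕ) : ℝ))
        / Real.sqrt ((l j : ℕ) : ℝ) := rfl
    rw [this, Finset.sum_const, Finset.card_univ, Fintype.card_fin, nsmul_eq_mul]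
    have h2 := Real.mul_self_sqrt (hlpos j).le
    field_simp
    rw [Real.sq_sqrt (hlpos j).le]
    ring
  -- conclude
  apply le_antisymm
  · apply ContinuousLinearMap.opNorm_le_bound _ (norm_nonneg S)
    intro y
    rw [hTy y, hnormU]
    calc ‖S (W y)‖ ≤ ‖S‖ * ‖W y‖ := S.le_opNorm _
      _ ≤ ‖S‖ * ‖y‖ := by
          exact mul_le_mul_of_nonneg_left (hnormW y) (norm_nonneg S)
  · apply ContinuousLinearMap.opNorm_le_bound _ (norm_nonneg T)
    intro x
    have : ‖S x‖ = ‖T (V x)‖ := by rw [hTy, hWV, hnormU]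
    rw [this, ← hnormV x]
    exact T.le_opNorm _

open Finset in
-- helper: rational positive reals have a common-denominator representation
lemma common_denom {n : ℕ} (w : Fin n → ℝ) (hw : ∀ i, 0 < w i)
    (hwq : ∀ i, ∃ q : ℚ, (q : ℝ) = w i ^ 2) :
    ∃ (k : Fin n → ℕ+) (D : ℕ+), ∀ i, ((k i : ℕ) : ℝ) = w i ^ 2 * ((D : ℕ) : ℝ) := by
  choose q hq using hwq
  have hqpos : ∀ i, 0 < q i := by
    intro i
    have : (0:ℝ) < (q i : ℝ) := by rw [hq i]; exact pow_pos (hw i) 2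
    exact_mod_cast this
  set a : Fin n → ℕ := fun i => (q i).num.toNat with ha
  set b : Fin n → ℕ := fun i => (q i).den with hb
  have hbpos : ∀ i, 0 < b i := fun i => (q i).pos
  have hapos : ∀ i, 0 < a i := fun i => by have := Rat.num_pos.mpr (hqpos i); simp only [ha]; omega
  have hab : ∀ i, ((a i : ℝ)) / ((b i : ℝ)) = w i ^ 2 := by
    intro i
    have h0 : ((q i).num.toNat : ℤ) = (q i).num :=
      Int.toNat_of_nonneg (Rat.num_pos.mpr (hqpos i)).le
    have h1 : ((a i : ℕ) : ℝ) = ((q i).num : ℝ) := by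
      rw [ha]; exact_mod_cast h0
    rw [h1, hb]
    rw [← Rat.cast_def]
    exact hq i
  refine ⟨fun i => ⟨a i * ∏ i' ∈ univ.erase i, b i', by
      have := hapos i
      have : 0 < ∏ i' ∈ univ.erase i, b i' := Finset.prod_pos fun i' _ => hbpos i'
      positivity⟩,
    ⟨∏ i, b i, Finset.prod_pos fun i _ => hbpos i⟩, ?_⟩
  intro i
  have hD : ((∏ i', b i' : ℕ) : ℝ) = (b i : ℝ) * ((∏ i' ∈ univ.erase i, b i' : ℕ) : ℝ) := by
    rw [← Nat.cast_mul, Finset.mul_prod_erase univ b (Finset.mem_univ i)]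
  simp only [PNat.mk_ofNat, PNat.mk_coe]
  push_cast
  push_cast at hD
  rw [hD, ← hab i]
  have : (b i : ℝ) ≠ 0 := by exact_mod_cast (hbpos i).ne'
  field_simp

/-- If `w, v` have positive entries with rational squares, then some splitting
`A'` of `A` satisfies `√(n'·m')·‖A'‖ = ‖Ã‖·‖w‖·‖v‖`, where `ã_{ij} = a_{ij}/(w_i·v_j)`. -/
theorem splitting_realizes_rational_weights (n m : ℕ) (A : Matrix (Fin n) (Fin m) ℝ)
    (hrow : ∀ i, ∃ j, A i j ≠ 0) (hcol : ∀ j, ∃ i, A i j ≠ 0)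
    (w : Fin n → ℝ) (v : Fin m → ℝ)
    (hw : ∀ i, 0 < w i) (hv : ∀ j, 0 < v j)
    (hwq : ∀ i, ∃ q : ℚ, (q : ℝ) = w i ^ 2) (hvq : ∀ j, ∃ q : ℚ, (q : ℝ) = v j ^ 2)
    (Atil : Matrix (Fin n) (Fin m) ℝ)
    (hAtil : ∀ i j, Atil i j = A i j / (w i * v j)) :
    ∃ (k : Fin n → ℕ+) (l : Fin m → ℕ+),
      Real.sqrt ((∑ i, ((k i : ℕ) : ℝ)) * (∑ j, ((l j : ℕ) : ℝ))) * l2OpNorm (splitMatrix A k l)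
        = l2OpNorm Atil * Real.sqrt (∑ i, w i ^ 2) * Real.sqrt (∑ j, v j ^ 2) := by
  classical
  obtain ⟨k, D, hk⟩ := common_denom w hw hwq
  obtain ⟨l, E, hl⟩ := common_denom v hv hvq
  refine ⟨k, l, ?_⟩
  have hDpos : (0:ℝ) < (((D:ℕ)):ℝ) := by exact_mod_cast D.pos
  have hEpos : (0:ℝ) < (((E:ℕ)):ℝ) := by exact_mod_cast E.pos
  have hkpos : ∀ i, (0:ℝ) < ((k i : ℕ) : ℝ) := fun i => by exact_mod_cast (k i).pos
  have hlpos : ∀ j, (0:ℝ) < ((l j : ℕ) : ℝ) := fun j => by exact_mod_cast (l j).pos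
  set C : Matrix (Fin n) (Fin m) ℝ :=
    fun i j => A i j / (Real.sqrt ((k i : ℕ) : ℝ) * Real.sqrt ((l j : ℕ) : ℝ)) with hC
  -- split norm identity
  have hsplit : l2OpNorm (splitMatrix A k l) = l2OpNorm C := by
    apply l2OpNorm_split k l C
    intro p q
    show A p.1 q.1 / (((k p.1 : ℕ) : ℝ) * ((l q.1 : ℕ) : ℝ))
      = C p.1 q.1 / (Real.sqrt ((k p.1 : ℕ) : ℝ) * Real.sqrt ((l q.1 : ℕ) : ℝ))
    rw [hC]
    simp only
    rw [div_div]
    congr 1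
    have e1 := Real.mul_self_sqrt (hkpos p.1).le
    have e2 := Real.mul_self_sqrt (hlpos q.1).le
    have : (Real.sqrt ((k p.1 : ℕ) : ℝ) * Real.sqrt ((l q.1 : ℕ) : ℝ))
        * (Real.sqrt ((k p.1 : ℕ) : ℝ) * Real.sqrt ((l q.1 : ℕ) : ℝ))
        = ((k p.1 : ℕ) : ℝ) * ((l q.1 : ℕ) : ℝ) := by
      rw [mul_mul_mul_comm, e1, e2]
    exact this.symm
  -- C as a rescaling of Atil
  have hsqk : ∀ i, Real.sqrt ((k i : ℕ) : ℝ) = w i * Real.sqrt (((D:ℕ)):ℝ) := by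
    intro i
    rw [hk i, Real.sqrt_mul (sq_nonneg (w i)), Real.sqrt_sq (hw i).le]
  have hsql : ∀ j, Real.sqrt ((l j : ℕ) : ℝ) = v j * Real.sqrt (((E:ℕ)):ℝ) := by
    intro j
    rw [hl j, Real.sqrt_mul (sq_nonneg (v j)), Real.sqrt_sq (hv j).le]
  have hsD : (0:ℝ) < Real.sqrt (((D:ℕ)):ℝ) := Real.sqrt_pos.mpr hDpos
  have hsE : (0:ℝ) < Real.sqrt (((E:ℕ)):ℝ) := Real.sqrt_pos.mpr hEpos
  have hCs : C = (Real.sqrt ((((D:ℕ)):ℝ) * (((E:ℕ)):ℝ)))⁻¹ • Atil := by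
    funext i j
    have : ((Real.sqrt ((((D:ℕ)):ℝ) * (((E:ℕ)):ℝ)))⁻¹ • Atil) i j
        = (Real.sqrt ((((D:ℕ)):ℝ) * (((E:ℕ)):ℝ)))⁻¹ * Atil i j := rfl
    rw [hC]
    simp only
    rw [this, hAtil i j, hsqk i, hsql j, Real.sqrt_mul hDpos.le]
    rw [show (w i * Real.sqrt (((D:ℕ)):ℝ)) * (v j * Real.sqrt (((E:ℕ)):ℝ))
        = (w i * v j) * (Real.sqrt (((D:ℕ)):ℝ) * Real.sqrt (((E:ℕ)):ℝ)) by ring]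
    rw [← div_div, div_eq_inv_mul]
  have hnormC : l2OpNorm C
      = (Real.sqrt ((((D:ℕ)):ℝ) * (((E:ℕ)):ℝ)))⁻¹ * l2OpNorm Atil := by
    rw [hCs, l2OpNorm_smul]
    congr 1
    rw [abs_of_pos]
    positivity
  -- sum identities
  have hsumk : (∑ i, ((k i : ℕ) : ℝ)) = (∑ i, w i ^ 2) * (((D:ℕ)):ℝ) := by
    rw [Finset.sum_mul]
    exact Finset.sum_congr rfl fun i _ => hk i
  have hsuml : (∑ j, ((l j : ℕ) : ℝ)) = (∑ j, v j ^ 2) * (((E:ℕ)):ℝ) := by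
    rw [Finset.sum_mul]
    exact Finset.sum_congr rfl fun j _ => hl j
  rw [hsplit, hnormC, hsumk, hsuml]
  have hw2 : (0:ℝ) ≤ ∑ i, w i ^ 2 := Finset.sum_nonneg fun i _ => sq_nonneg _
  have hv2 : (0:ℝ) ≤ ∑ j, v j ^ 2 := Finset.sum_nonneg fun j _ => sq_nonneg _
  rw [Real.sqrt_mul (by positivity), Real.sqrt_mul hw2, Real.sqrt_mul hv2,
    Real.sqrt_mul hDpos.le]
  field_simp
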